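/- Radial coloring lemma: Suppose A_r (0 < r < 1/2) is given a proper radial coloring. Then the interior of each color class is contained in a single sector of angular width θ = arccos(1 - 1/(2(1/2 + r)²)). Equivalently, if two radial segments have the same color and the maximal distance between a point of one and a point of the other exceeds 1, the coloring cannot be proper. -/

import Mathlib

def annulus (r : ℝ) : Set ℂ := {p : ℂ | 1 / 2 - r ≤ ‖p‖ ∧ ‖p‖ ≤ 1 / 2 + r}

/-- The radial segment of the annulus `A_r` at angle `β`. -/
def radialSegment (r β : ℝ) : Set ℂ :=
  (fun t : ℝ => (t : ℂ) * Complex.exp (β * Complex.I)) '' Set.Icc (1 / 2 - r) (1 / 2 + r)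

/-- If two radial segments of `A_r` are monochromatic of the same color, and some point of
one is at distance greater than `1` from some point of the other, then the coloring is
not proper: some two points of the annulus at distance exactly `1` share a color. -/
theorem radial_coloring_lemma (r : ℝ) (hr0 : 0 < r) (hr1 : r < 1 / 2)
    (c : ℂ → ℕ) (k : ℕ) (β₁ β₂ : ℝ)
    (h₁ : ∀ p ∈ radialSegment r β₁, c p = k)
    (h₂ : ∀ p ∈ radialSegment r β₂, c p = k)
    (hfar : ∃ p ∈ radialSegment r β₁, ∃ q ∈ radialSegment r β₂, 1 < ‖p - q‖) :
    ∃ p ∈ annulus r, ∃ q ∈ annulus r, ‖p - q‖ = 1 ∧ c p = c q := by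
  obtain ⟨p, ⟨t₀, ht₀, rfl⟩, q, ⟨s₀, hs₀, rfl⟩, hgt⟩ := hfar
  set a : ℝ := 1 / 2 - r with ha
  set b : ℝ := 1 / 2 + r with hb
  obtain ⟨ht₀1, ht₀2⟩ := ht₀
  obtain ⟨hs₀1, hs₀2⟩ := hs₀
  have ha0 : 0 < a := by simp [ha]; linarith
  -- the moving distance function
  set f : ℝ → ℝ := fun u =>
    ‖((t₀ + u * (a - t₀) : ℝ) : ℂ) * Complex.exp (β₁ * Complex.I) -
      ((s₀ + u * (a - s₀) : ℝ) : ℂ) * Complex.exp (β₂ * Complex.I)‖ with hf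
  have hcont : Continuous f := by
    apply Continuous.norm
    fun_prop
  have hf0 : 1 < f 0 := by simpa [hf] using hgt
  have hf1 : f 1 < 1 := by
    have h1 : f 1 = ‖(a : ℂ) * Complex.exp (β₁ * Complex.I) -
        (a : ℂ) * Complex.exp (β₂ * Complex.I)‖ := by
      simp [hf]
    have h2 : ‖(a : ℂ) * Complex.exp (β₁ * Complex.I) -
        (a : ℂ) * Complex.exp (β₂ * Complex.I)‖ ≤
        ‖(a : ℂ) * Complex.exp (β₁ * Complex.I)‖ +
        ‖(a : ℂ) * Complex.exp (β₂ * Complex.I)‖ := norm_sub_le _ _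
    have h3 : ∀ β : ℝ, ‖(a : ℂ) * Complex.exp (β * Complex.I)‖ = a := by
      intro β
      simp [map_mul, Complex.norm_exp_ofReal_mul_I,
        abs_of_pos ha0]
    rw [h1]
    have := h3 β₁
    have := h3 β₂
    have : a + a < 1 := by simp [ha]; linarith
    linarith [h2, h3 β₁, h3 β₂]
  -- intermediate value theorem
  have hsub : Set.Icc (f 1) (f 0) ⊆ f '' Set.Icc (0 : ℝ) 1 :=
    intermediate_value_Icc' (by norm_num) hcont.continuousOn
  obtain ⟨u, hu, hfu⟩ := hsub ⟨le_of_lt hf1, le_of_lt hf0⟩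
  obtain ⟨hu0, hu1⟩ := hu
  set t : ℝ := t₀ + u * (a - t₀) with htdef
  set s : ℝ := s₀ + u * (a - s₀) with hsdef
  have htmem : t ∈ Set.Icc a b := by
    constructor
    · nlinarith
    · nlinarith
  have hsmem : s ∈ Set.Icc a b := by
    constructor
    · nlinarith
    · nlinarith
  refine ⟨(t : ℂ) * Complex.exp (β₁ * Complex.I), ?_,
    (s : ℂ) * Complex.exp (β₂ * Complex.I), ?_, ?_, ?_⟩
  · have : ‖(t : ℂ) * Complex.exp (β₁ * Complex.I)‖ = t := by
      simp [map_mul, Complex.norm_exp_ofReal_mul_I,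
        abs_of_pos (lt_of_lt_of_le ha0 htmem.1)]
    exact ⟨by rw [this]; exact htmem.1, by rw [this]; exact htmem.2⟩
  · have : ‖(s : ℂ) * Complex.exp (β₂ * Complex.I)‖ = s := by
      simp [map_mul, Complex.norm_exp_ofReal_mul_I,
        abs_of_pos (lt_of_lt_of_le ha0 hsmem.1)]
    exact ⟨by rw [this]; exact hsmem.1, by rw [this]; exact hsmem.2⟩
  · exact hfu
  · rw [h₁ _ ⟨t, htmem, rfl⟩, h₂ _ ⟨s, hsmem, rfl⟩]
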